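/- Let (ν_j) satisfy ν_j ≤ C j^{-3/2-δ} for some δ > 0, and let Z_j be i.i.d. standard normals. Then ∑_{j=1}^∞ ν_j |Z_j| converges almost surely, and there exist constants c', C' > 0 such that for any k ≥ 1 and ε > 0 with k^{2+2δ} ε² large enough, P(∑_{j≥k} ν_j |Z_j| ≥ ε) ≤ C' 2^k exp(-c' k^{2+2δ} ε²). -/

import Mathlib

open MeasureTheory ProbabilityTheory Real
open scoped ENNReal NNReal

section aux

lemma gauss_pdf_eq12 (t x : ℝ) :
    Real.exp (t * x) * gaussianPDFReal 0 1 x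
      = (Real.sqrt (2 * π))⁻¹ * (Real.exp (t^2/2) * Real.exp (-(1/2) * (x - t)^2)) := by
  rw [gaussianPDFReal]
  push_cast
  simp only [mul_one, sub_zero]
  rw [mul_left_comm, ← Real.exp_add, ← Real.exp_add]
  congr 2
  ring

lemma gauss_int_exp12 (t : ℝ) :
    Integrable (fun x => Real.exp (t * x)) (gaussianReal 0 1) := by
  rw [gaussianReal_of_var_ne_zero _ one_ne_zero]
  rw [integrable_withDensity_iff (measurable_gaussianPDF 0 1)
    (Filter.Eventually.of_forall fun x => ENNReal.ofReal_lt_top)]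
  have : ∀ x : ℝ, Real.exp (t * x) * (gaussianPDF 0 1 x).toReal
      = (Real.sqrt (2 * π))⁻¹ * (Real.exp (t^2/2) * Real.exp (-(1/2) * (x - t)^2)) := by
    intro x
    rw [gaussianPDF, ENNReal.toReal_ofReal (gaussianPDFReal_nonneg 0 1 x)]
    exact gauss_pdf_eq12 t x
  simp_rw [this]
  refine Integrable.const_mul ?_ _
  refine Integrable.const_mul ?_ _
  exact (integrable_exp_neg_mul_sq (by norm_num : (0:ℝ) < 1/2)).comp_sub_right t

lemma gauss_mgf12 (t : ℝ) :
    ∫ x, Real.exp (t * x) ∂(gaussianReal 0 1) = Real.exp (t^2/2) := by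
  have hpdf : gaussianPDF 0 1
      = fun x => ((Real.toNNReal (gaussianPDFReal 0 1 x) : ℝ≥0) : ℝ≥0∞) := by
    funext x; rw [gaussianPDF, ENNReal.ofReal]
  rw [gaussianReal_of_var_ne_zero _ one_ne_zero, hpdf,
    integral_withDensity_eq_integral_smul
      ((measurable_gaussianPDFReal 0 1).real_toNNReal) _]
  have : ∀ x : ℝ, (Real.toNNReal (gaussianPDFReal 0 1 x)) • Real.exp (t * x)
      = (Real.sqrt (2 * π))⁻¹ * Real.exp (t^2/2) * Real.exp (-(1/2) * (x - t)^2) := by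
    intro x
    rw [NNReal.smul_def, smul_eq_mul, Real.coe_toNNReal _ (gaussianPDFReal_nonneg 0 1 x),
      mul_comm, gauss_pdf_eq12 t x, mul_assoc]
  simp_rw [this, integral_const_mul]
  rw [integral_sub_right_eq_self (μ := volume) (fun x => Real.exp (-(1/2) * x^2)) t,
    integral_gaussian]
  rw [show π / (1/2) = 2 * π by ring, mul_comm ((√(2 * π))⁻¹), mul_assoc,
    inv_mul_cancel₀ (Real.sqrt_ne_zero'.mpr (by positivity)), mul_one]

variable {Ω : Type*} [MeasurableSpace Ω] {P : Measure Ω}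

lemma int_exp_Z12 {X : Ω → ℝ} (hm : Measurable X) (hl : P.map X = gaussianReal 0 1) (t : ℝ) :
    Integrable (fun ω => Real.exp (t * X ω)) P := by
  have h := gauss_int_exp12 t
  rw [← hl] at h
  exact (integrable_map_measure ((measurable_const_mul t).exp.aestronglyMeasurable)
    hm.aemeasurable).mp h

lemma mgf_Z12 {X : Ω → ℝ} (hm : Measurable X) (hl : P.map X = gaussianReal 0 1) (t : ℝ) :
    ∫ ω, Real.exp (t * X ω) ∂P = Real.exp (t^2/2) := by
  have h := gauss_mgf12 t
  rw [← hl, integral_map hm.aemeasurable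
    ((measurable_const_mul t).exp.aestronglyMeasurable)] at h
  exact h

lemma int_exp_absZ12 {X : Ω → ℝ} (hm : Measurable X) (hl : P.map X = gaussianReal 0 1) (t : ℝ) :
    Integrable (fun ω => Real.exp (t * |X ω|)) P := by
  refine Integrable.mono' ((int_exp_Z12 hm hl t).add (int_exp_Z12 hm hl (-t)))
    (((hm.abs.const_mul t).exp).aestronglyMeasurable) (Filter.Eventually.of_forall fun ω => ?_)
  rw [Real.norm_eq_abs, abs_of_pos (Real.exp_pos _)]
  rcases abs_choice (X ω) with h | h <;> rw [h]
  · exact le_add_of_nonneg_right (by positivity)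
  · have : Real.exp (t * -X ω) = Real.exp (-t * X ω) := by ring_nf
    simp only [Pi.add_apply]
    rw [this]
    exact le_add_of_nonneg_left (by positivity)

lemma mgf_absZ12 {X : Ω → ℝ} [IsProbabilityMeasure P] (hm : Measurable X)
    (hl : P.map X = gaussianReal 0 1) (t : ℝ) :
    mgf (fun ω => |X ω|) P t ≤ 2 * Real.exp (t^2/2) := by
  have h1 : mgf (fun ω => |X ω|) P t = ∫ ω, Real.exp (t * |X ω|) ∂P := rfl
  rw [h1]
  calc ∫ ω, Real.exp (t * |X ω|) ∂P
      ≤ ∫ ω, (Real.exp (t * X ω) + Real.exp (-t * X ω)) ∂P := by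
        refine integral_mono (int_exp_absZ12 hm hl t)
          ((int_exp_Z12 hm hl t).add (int_exp_Z12 hm hl (-t))) fun ω => ?_
        rcases abs_choice (X ω) with h | h <;> rw [h]
        · exact le_add_of_nonneg_right (by positivity)
        · have : Real.exp (t * -X ω) = Real.exp (-t * X ω) := by ring_nf
          rw [this]
          exact le_add_of_nonneg_left (by positivity)
    _ = 2 * Real.exp (t^2/2) := by
        rw [integral_add (int_exp_Z12 hm hl t) (int_exp_Z12 hm hl (-t)), mgf_Z12 hm hl t,
          mgf_Z12 hm hl (-t)]
        rw [neg_sq]; ring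

lemma chernoff_block12 [IsProbabilityMeasure P] (Z : ℕ → Ω → ℝ) (hmeas : ∀ j, Measurable (Z j))
    (hlaw : ∀ j, P.map (Z j) = gaussianReal 0 1)
    (hindep : iIndepFun Z P)
    (F : Finset ℕ) (k : ℕ) (hk : 1 ≤ k) (hcard : F.card = k) (c : ℝ) (hc : 0 ≤ c) :
    P {ω | c ≤ ∑ j ∈ F, |Z j ω|} ≤
      ENNReal.ofReal (2^k * Real.exp (-c^2 / (2*k))) := by
  set A : ℕ → Ω → ℝ := fun j ω => |Z j ω| with hA
  have hAmeas : ∀ j, Measurable (A j) := fun j => (hmeas j).abs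
  have hAindep : iIndepFun A P :=
    hindep.comp (fun _ (x : ℝ) => |x|) (fun _ => measurable_abs)
  set t : ℝ := c / k with hT
  have ht : 0 ≤ t := div_nonneg hc (Nat.cast_nonneg k)
  have hint : ∀ j ∈ F, Integrable (fun ω => Real.exp (t * A j ω)) P :=
    fun j _ => int_exp_absZ12 (hmeas j) (hlaw j) t
  have h1 := measure_ge_le_exp_mul_mgf (X := ∑ j ∈ F, A j) (μ := P) c ht
    (hAindep.integrable_exp_mul_sum hAmeas hint)
  have h2 : mgf (∑ j ∈ F, A j) P t ≤ (2 * Real.exp (t^2/2))^k := by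
    rw [hAindep.mgf_sum hAmeas F, ← hcard, ← Finset.prod_const]
    exact Finset.prod_le_prod (fun j _ => mgf_nonneg)
      (fun j _ => mgf_absZ12 (hmeas j) (hlaw j) t)
  have hset : {ω | c ≤ ∑ j ∈ F, |Z j ω|} = {ω | c ≤ (∑ j ∈ F, A j) ω} := by
    ext ω; simp [Finset.sum_apply, hA]
  rw [hset]
  have h3 : (P {ω | c ≤ (∑ j ∈ F, A j) ω}).toReal ≤ 2^k * Real.exp (-c^2 / (2*k)) := by
    refine h1.trans ?_
    calc Real.exp (-t * c) * mgf (∑ j ∈ F, A j) P t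
        ≤ Real.exp (-t * c) * (2 * Real.exp (t^2/2))^k := by
          exact mul_le_mul_of_nonneg_left h2 (Real.exp_pos _).le
      _ = 2^k * Real.exp (-c^2 / (2*k)) := by
          rw [mul_pow, ← Real.exp_nat_mul, mul_left_comm, ← Real.exp_add]
          congr 2
          rw [hT]
          have hk0 : (k : ℝ) ≠ 0 := Nat.cast_ne_zero.mpr (by omega)
          field_simp
          ring
  rw [← ENNReal.ofReal_toReal (measure_ne_top P _)]
  exact ENNReal.ofReal_le_ofReal h3

lemma gauss_abs_lintegral_lt_top12 :
    ∫⁻ x, ENNReal.ofReal |x| ∂(gaussianReal 0 1) < ⊤ := by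
  have hint : Integrable (fun x => Real.exp (1 * x) + Real.exp (-1 * x)) (gaussianReal 0 1) :=
    (gauss_int_exp12 1).add (gauss_int_exp12 (-1))
  refine lt_of_le_of_lt ?_ hint.lintegral_lt_top
  refine lintegral_mono fun x => ENNReal.ofReal_le_ofReal ?_
  calc |x| ≤ Real.exp |x| := (le_add_of_nonneg_left zero_le_one).trans
        (by linarith [Real.add_one_le_exp |x|])
    _ ≤ Real.exp (1 * x) + Real.exp (-1 * x) := by
        rcases abs_choice x with h | h <;> rw [h]
        · rw [one_mul]; exact le_add_of_nonneg_right (Real.exp_pos _).le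
        · rw [show -1 * x = -x by ring]; exact le_add_of_nonneg_left (Real.exp_pos _).le

lemma as_summable12 [IsProbabilityMeasure P] (Z : ℕ → Ω → ℝ) (hmeas : ∀ j, Measurable (Z j))
    (hlaw : ∀ j, P.map (Z j) = gaussianReal 0 1)
    (ν : ℕ → ℝ) (hν0 : ∀ j, 0 ≤ ν j) (hνsum : Summable ν) :
    ∀ᵐ ω ∂P, Summable fun j => ν j * |Z j ω| := by
  set M : ℝ≥0∞ := ∫⁻ x, ENNReal.ofReal |x| ∂(gaussianReal 0 1) with hM
  have hMlt : M < ⊤ := gauss_abs_lintegral_lt_top12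
  have hj : ∀ j, ∫⁻ ω, ENNReal.ofReal (ν j * |Z j ω|) ∂P = ENNReal.ofReal (ν j) * M := by
    intro j
    have : ∀ ω, ENNReal.ofReal (ν j * |Z j ω|) =
        ENNReal.ofReal (ν j) * ENNReal.ofReal |Z j ω| := fun ω =>
      ENNReal.ofReal_mul (hν0 j)
    simp_rw [this]
    rw [lintegral_const_mul _ (hmeas j).abs.ennreal_ofReal]
    congr 1
    rw [hM, ← hlaw j, lintegral_map measurable_abs.ennreal_ofReal (hmeas j)]
  have hfin : ∫⁻ ω, ∑' j, ENNReal.ofReal (ν j * |Z j ω|) ∂P < ⊤ := by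
    rw [lintegral_tsum (f := fun j ω => ENNReal.ofReal (ν j * |Z j ω|)) fun j =>
      Measurable.aemeasurable (((hmeas j).abs.const_mul (ν j)).ennreal_ofReal)]
    simp_rw [hj, ENNReal.tsum_mul_right]
    rw [← ENNReal.ofReal_tsum_of_nonneg hν0 hνsum]
    exact ENNReal.mul_lt_top ENNReal.ofReal_lt_top hMlt
  have hae : ∀ᵐ ω ∂P, ∑' j, ENNReal.ofReal (ν j * |Z j ω|) < ⊤ :=
    ae_lt_top (Measurable.ennreal_tsum
      (fun j => ((hmeas j).abs.const_mul (ν j)).ennreal_ofReal)) hfin.ne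
  filter_upwards [hae] with ω hω
  have : ∀ j, ENNReal.ofReal (ν j * |Z j ω|) = ((ν j * |Z j ω|).toNNReal : ℝ≥0∞) :=
    fun j => rfl
  rw [funext this] at hω
  have hs : Summable fun j => (ν j * |Z j ω|).toNNReal :=
    ENNReal.tsum_coe_ne_top_iff_summable.mp hω.ne
  have := NNReal.summable_coe.mpr hs
  refine this.congr fun j => ?_
  exact Real.coe_toNNReal _ (mul_nonneg (hν0 j) (abs_nonneg _))

end aux

/-- If `0 ≤ ν_j ≤ C j^{-3/2-δ}` with `δ > 0` and `Z_j` are i.i.d. standard normals, then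
`∑_j ν_j |Z_j|` converges almost surely, and there are constants `c', C' > 0` such that for
all `k ≥ 1` and `ε > 0` with `k^{2+2δ} ε²` large enough,
`P(∑_{j ≥ k} ν_j |Z_j| ≥ ε) ≤ C' 2^k exp (-c' k^{2+2δ} ε²)`. -/
theorem stmt_12 {Ω : Type*} [MeasurableSpace Ω] (P : Measure Ω) [IsProbabilityMeasure P]
    (Z : ℕ → Ω → ℝ) (hmeas : ∀ j, Measurable (Z j))
    (hlaw : ∀ j, P.map (Z j) = gaussianReal 0 1)
    (hindep : iIndepFun Z P)
    (ν : ℕ → ℝ) (C δ : ℝ) (hδ : 0 < δ) (hν0 : ∀ j, 0 ≤ ν j)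
    (hν : ∀ j : ℕ, 1 ≤ j → ν j ≤ C * (j : ℝ) ^ (-(3 / 2) - δ)) :
    (∀ᵐ ω ∂P, Summable fun j => ν j * |Z j ω|) ∧
    ∃ c' > 0, ∃ C' > 0, ∃ T : ℝ, ∀ k : ℕ, 1 ≤ k → ∀ ε : ℝ, 0 < ε →
      T ≤ (k : ℝ) ^ (2 + 2 * δ) * ε ^ 2 →
      P {ω | ε ≤ ∑' j : {j : ℕ // k ≤ j}, ν j * |Z j ω|} ≤
        ENNReal.ofReal (C' * 2 ^ k * Real.exp (-c' * (k : ℝ) ^ (2 + 2 * δ) * ε ^ 2)) := by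
  -- basic constants
  set p : ℝ := 3/2 + δ with hp
  have hpq : -(3/2 : ℝ) - δ = -p := by rw [hp]; ring
  have hC1 : (0:ℝ) < max C 1 := lt_max_of_lt_right one_pos
  set C₁ : ℝ := max C 1 with hC₁def
  -- ν is summable
  have hf0 : Summable (fun n : ℕ => (n:ℝ) ^ (-(3/2 : ℝ) - δ)) :=
    Real.summable_nat_rpow.mpr (by linarith)
  have hg : Summable (fun n : ℕ => C * ((n+1 : ℕ) : ℝ) ^ (-(3/2 : ℝ) - δ)) :=
    Summable.mul_left C
      ((summable_nat_add_iff (f := fun n : ℕ => (n:ℝ) ^ (-(3/2 : ℝ) - δ)) 1).mpr hf0)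
  have hνshift : Summable (fun n : ℕ => ν (n+1)) :=
    Summable.of_nonneg_of_le (fun n => hν0 _) (fun n => hν (n+1) (by omega)) hg
  have hνsum : Summable ν := (summable_nat_add_iff 1).mp hνshift
  refine ⟨as_summable12 Z hmeas hlaw ν hν0 hνsum, ?_⟩
  -- the constant A
  have hAsum : Summable (fun i : ℕ => ((i:ℝ)+1) ^ (-(1+δ))) := by
    have h := (summable_nat_add_iff (f := fun n : ℕ => (n:ℝ) ^ (-(1+δ))) 1).mpr
      (Real.summable_nat_rpow.mpr (show -(1+δ) < -1 by linarith))
    refine h.congr fun n => ?_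
    push_cast
    rfl
  set A : ℝ := ∑' i : ℕ, ((i:ℝ)+1) ^ (-(1+δ)) with hAdef
  have hA1 : (1:ℝ) ≤ A := by
    have h0 := Summable.le_tsum hAsum 0 (fun i _ => Real.rpow_nonneg (by positivity) _)
    rw [← hAdef] at h0
    simp only [Nat.cast_zero, zero_add, Real.one_rpow] at h0
    exact h0
  have hApos : (0:ℝ) < A := lt_of_lt_of_le one_pos hA1
  set a : ℕ → ℝ := fun i => ((i:ℝ)+1) ^ (-(1+δ)) / (2*A) with hadef
  have hapos : ∀ i, 0 < a i := fun i => div_pos (Real.rpow_pos_of_pos (by positivity) _)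
    (by positivity)
  have hasum : Summable a := hAsum.div_const _
  have hatsum : ∑' i, a i = 1/2 := by
    rw [hadef, tsum_div_const, ← hAdef, div_eq_iff (by positivity : (2:ℝ)*A ≠ 0)]
    ring
  set c' : ℝ := 1 / (8 * A^2 * C₁^2) with hc'def
  have hc'pos : 0 < c' := by positivity
  refine ⟨c', hc'pos, 2, two_pos, Real.log 2 / c', ?_⟩
  intro k hk ε hε hT
  set K : ℝ := (k : ℝ) with hKdef
  have hKpos : (0:ℝ) < K := by
    rw [hKdef]
    exact_mod_cast Nat.pos_of_ne_zero (by omega)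
  set x : ℝ := K ^ (2 + 2*δ) * ε^2 with hxdef
  have hxpos : 0 < x := by positivity
  -- blocks
  set B : ℕ → Ω → ℝ := fun i ω => ∑ j ∈ Finset.Ico (k*(i+1)) (k*(i+2)), ν j * |Z j ω|
    with hBdef
  -- decomposition of initial segments into blocks
  have hdecomp : ∀ (ω : Ω) (N : ℕ),
      ∑ j ∈ Finset.Ico k (k*(N+1)), ν j * |Z j ω| = ∑ i ∈ Finset.range N, B i ω := by
    intro ω N
    induction N with
    | zero => simp
    | succ N ih =>
      rw [Finset.sum_range_succ, ← ih, hBdef,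
        ← Finset.sum_Ico_consecutive _ (by nlinarith [Nat.one_le_iff_ne_zero.mp hk] : k ≤ k*(N+1))
          (by nlinarith : k*(N+1) ≤ k*(N+2))]
  -- inclusion into union of block events
  have hsub : {ω | ε ≤ ∑' j : {j : ℕ // k ≤ j}, ν j * |Z j ω|} ⊆
      ⋃ i : ℕ, {ω | a i * ε ≤ B i ω} := by
    intro ω hω
    simp only [Set.mem_setOf_eq] at hω
    by_contra hcon
    simp only [Set.mem_iUnion, Set.mem_setOf_eq, not_exists, not_le] at hcon
    have hle : (∑' j : {j : ℕ // k ≤ j}, ν j * |Z j ω|) ≤ ε/2 := by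
      refine tsum_le_of_sum_le' (by positivity) fun u => ?_
      set v : Finset ℕ := u.map (Function.Embedding.subtype fun j => k ≤ j) with hvdef
      have hsum_uv : ∑ j ∈ u, ν j.val * |Z j.val ω| = ∑ j ∈ v, ν j * |Z j ω| := by
        rw [hvdef, Finset.sum_map]
        rfl
      set N : ℕ := v.sup id + 1 with hNdef
      have hvsub : v ⊆ Finset.Ico k (k*(N+1)) := by
        intro j hj
        rw [Finset.mem_Ico]
        constructor
        · rw [hvdef, Finset.mem_map] at hj
          obtain ⟨⟨j', hj'⟩, _, rfl⟩ := hj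
          exact hj'
        · have h1 : j ≤ v.sup id := Finset.le_sup (f := id) hj
          have h2 : k*(N+1) ≥ N+1 := Nat.le_mul_of_pos_left _ (by omega)
          omega
      calc ∑ j ∈ u, ν j.val * |Z j.val ω| = ∑ j ∈ v, ν j * |Z j ω| := hsum_uv
        _ ≤ ∑ j ∈ Finset.Ico k (k*(N+1)), ν j * |Z j ω| :=
            Finset.sum_le_sum_of_subset_of_nonneg hvsub
              (fun j _ _ => mul_nonneg (hν0 j) (abs_nonneg _))
        _ = ∑ i ∈ Finset.range N, B i ω := hdecomp ω N
        _ ≤ ∑ i ∈ Finset.range N, a i * ε :=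
            Finset.sum_le_sum fun i _ => (hcon i).le
        _ = (∑ i ∈ Finset.range N, a i) * ε := by rw [Finset.sum_mul]
        _ ≤ (∑' i, a i) * ε := by
            refine mul_le_mul_of_nonneg_right ?_ hε.le
            exact Summable.sum_le_tsum _ (fun i _ => (hapos i).le) hasum
        _ = ε/2 := by rw [hatsum]; ring
    linarith
  -- bound for each block event
  have hblock : ∀ i : ℕ, P {ω | a i * ε ≤ B i ω} ≤
      ENNReal.ofReal (2^k * Real.exp (-(c' * x * ((i:ℝ)+1)))) := by
    intro i
    set m : ℕ := k*(i+1) with hmdef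
    set u : ℝ := (i:ℝ)+1 with hudef
    have hupos : (0:ℝ) < u := by positivity
    have hmcast : (m:ℝ) = K * u := by rw [hmdef, hKdef, hudef]; push_cast; ring
    have hmpos : (0:ℝ) < (m:ℝ) := by rw [hmcast]; positivity
    set ci : ℝ := a i * ε * (m:ℝ)^p / C₁ with hcidef
    have hcipos : 0 < ci := by
      refine div_pos (mul_pos (mul_pos (hapos i) hε) (Real.rpow_pos_of_pos hmpos p)) hC1
    -- pointwise bound of the block by sum of |Z|
    have hptwise : ∀ ω, B i ω ≤ C₁ * (m:ℝ)^(-p) * ∑ j ∈ Finset.Ico m (k*(i+2)), |Z j ω| := by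
      intro ω
      show ∑ j ∈ Finset.Ico m (k*(i+2)), ν j * |Z j ω| ≤ _
      rw [Finset.mul_sum]
      refine Finset.sum_le_sum fun j hj => ?_
      have hjm : m ≤ j := (Finset.mem_Ico.mp hj).1
      have hj1 : 1 ≤ j := le_trans (by rw [hmdef]; nlinarith [Nat.one_le_iff_ne_zero.mp hk]) hjm
      have hνj : ν j ≤ C₁ * (m:ℝ)^(-p) := by
        calc ν j ≤ C * (j:ℝ) ^ (-(3/2) - δ) := hν j hj1
          _ ≤ C₁ * (j:ℝ) ^ (-(3/2) - δ) := by
              refine mul_le_mul_of_nonneg_right (le_max_left C 1) ?_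
              exact Real.rpow_nonneg (Nat.cast_nonneg j) _
          _ = C₁ * (j:ℝ) ^ (-p) := by rw [hpq]
          _ ≤ C₁ * (m:ℝ)^(-p) := by
              refine mul_le_mul_of_nonneg_left ?_ hC1.le
              refine Real.rpow_le_rpow_of_nonpos hmpos (by exact_mod_cast hjm) ?_
              rw [hp]; linarith
      exact mul_le_mul_of_nonneg_right hνj (abs_nonneg _) |>.trans
        (le_of_eq rfl)
    -- event inclusion
    have hincl : {ω | a i * ε ≤ B i ω} ⊆
        {ω | ci ≤ ∑ j ∈ Finset.Ico m (k*(i+2)), |Z j ω|} := by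
      intro ω hω
      simp only [Set.mem_setOf_eq] at hω ⊢
      have hS : a i * ε ≤ C₁ * (m:ℝ)^(-p) * ∑ j ∈ Finset.Ico m (k*(i+2)), |Z j ω| :=
        hω.trans (hptwise ω)
      have hmp1 : (m:ℝ)^(-p) * (m:ℝ)^p = 1 := by
        rw [← Real.rpow_add hmpos]; simp
      rw [hcidef, div_le_iff₀ hC1]
      calc a i * ε * (m:ℝ)^p
          ≤ (C₁ * (m:ℝ)^(-p) * ∑ j ∈ Finset.Ico m (k*(i+2)), |Z j ω|) * (m:ℝ)^p :=
            mul_le_mul_of_nonneg_right hS (Real.rpow_nonneg hmpos.le p)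
        _ = (∑ j ∈ Finset.Ico m (k*(i+2)), |Z j ω|) * C₁ * ((m:ℝ)^(-p) * (m:ℝ)^p) := by ring
        _ = (∑ j ∈ Finset.Ico m (k*(i+2)), |Z j ω|) * C₁ := by rw [hmp1, mul_one]
    have hcard : (Finset.Ico m (k*(i+2))).card = k := by
      rw [Nat.card_Ico, hmdef]
      have : k*(i+2) = k*(i+1) + k := by ring
      omega
    have hch := chernoff_block12 (P := P) Z hmeas hlaw hindep (Finset.Ico m (k*(i+2)))
      k hk hcard ci hcipos.le
    refine (measure_mono hincl).trans (hch.trans (ENNReal.ofReal_le_ofReal ?_))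
    -- the exponent computation
    have hKu : (0:ℝ) < K * u := by positivity
    have e1 : (((K*u))^p)^2 = (K^(2+2*δ) * K) * u^(3+2*δ) := by
      rw [sq, ← Real.rpow_add hKu, Real.mul_rpow hKpos.le hupos.le]
      congr 1
      · rw [show K^(2+2*δ) * K = K^(2+2*δ) * K^(1:ℝ) by rw [Real.rpow_one],
          ← Real.rpow_add hKpos]
        congr 1
        rw [hp]; ring
      · congr 1
        rw [hp]; ring
    have e2 : (u^(-(1+δ)))^2 * u^(3+2*δ) = u := by
      rw [sq, ← Real.rpow_add hupos, ← Real.rpow_add hupos,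
        show -(1+δ) + -(1+δ) + (3+2*δ) = (1:ℝ) by ring, Real.rpow_one]
    have key : ci^2 / (2*(k:ℝ)) = c' * x * u := by
      have hciK : ci = (u ^ (-(1+δ)) / (2*A)) * ε * ((K*u))^p / C₁ := by
        rw [hcidef, hadef, hmcast, hudef]
      calc ci^2 / (2*(k:ℝ))
          = ((u^(-(1+δ)))^2 * (((K*u))^p)^2) * ε^2 / ((2*A)^2 * C₁^2 * (2*K)) := by
            rw [hciK, ← hKdef]; ring
        _ = ((u^(-(1+δ)))^2 * ((K^(2+2*δ) * K) * u^(3+2*δ))) * ε^2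
              / ((2*A)^2 * C₁^2 * (2*K)) := by rw [e1]
        _ = (((u^(-(1+δ)))^2 * u^(3+2*δ)) * (K^(2+2*δ) * ε^2) / (8*A^2*C₁^2)) * (K/K) := by
            ring
        _ = c' * x * u := by
            rw [e2, div_self hKpos.ne', hc'def, hxdef]; ring
    rw [show -ci^2/(2*(k:ℝ)) = -(ci^2/(2*(k:ℝ))) by ring, key]
  -- summing up
  set r : ℝ := Real.exp (-(c' * x)) with hrdef
  have hrpos : 0 < r := Real.exp_pos _
  have hrhalf : r ≤ 1/2 := by
    rw [hrdef]
    have : Real.log 2 ≤ c' * x := by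
      rw [div_le_iff₀ hc'pos] at hT
      calc Real.log 2 ≤ x * c' := hT
        _ = c' * x := by ring
    calc Real.exp (-(c' * x)) ≤ Real.exp (-(Real.log 2)) := by
          exact Real.exp_le_exp.mpr (by linarith)
      _ = 1/2 := by rw [Real.exp_neg, Real.exp_log two_pos]; norm_num
  have hrlt1 : r < 1 := lt_of_le_of_lt hrhalf (by norm_num)
  have hexp_eq : ∀ i : ℕ, Real.exp (-(c' * x * ((i:ℝ)+1))) = r * r^i := by
    intro i
    rw [hrdef, ← Real.exp_nat_mul, ← Real.exp_add]
    congr 1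
    push_cast
    ring
  have hterm_sum : Summable (fun i : ℕ => 2^k * (r * r^i)) :=
    ((summable_geometric_of_lt_one hrpos.le hrlt1).mul_left r).mul_left _
  calc P {ω | ε ≤ ∑' j : {j : ℕ // k ≤ j}, ν j * |Z j ω|}
      ≤ P (⋃ i : ℕ, {ω | a i * ε ≤ B i ω}) := measure_mono hsub
    _ ≤ ∑' i, P {ω | a i * ε ≤ B i ω} := measure_iUnion_le _
    _ ≤ ∑' i : ℕ, ENNReal.ofReal (2^k * (r * r^i)) := by
        refine ENNReal.tsum_le_tsum fun i => ?_
        rw [← hexp_eq i]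
        exact hblock i
    _ = ENNReal.ofReal (∑' i : ℕ, 2^k * (r * r^i)) := by
        rw [ENNReal.ofReal_tsum_of_nonneg (fun i => by positivity) hterm_sum]
    _ ≤ ENNReal.ofReal (2 * 2^k * Real.exp (-c' * K ^ (2+2*δ) * ε^2)) := by
        refine ENNReal.ofReal_le_ofReal ?_
        rw [tsum_mul_left, tsum_mul_left, tsum_geometric_of_lt_one hrpos.le hrlt1]
        have h1r : (1 - r)⁻¹ ≤ 2 := by
          rw [inv_le_comm₀ (by linarith) two_pos]
          linarith
        have : Real.exp (-c' * K ^ (2+2*δ) * ε^2) = r := by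
          rw [hrdef, hxdef]; congr 1; ring
        rw [this]
        calc (2:ℝ)^k * (r * (1-r)⁻¹) ≤ 2^k * (r * 2) := by
              refine mul_le_mul_of_nonneg_left ?_ (by positivity)
              exact mul_le_mul_of_nonneg_left h1r hrpos.le
          _ = 2 * 2^k * r := by ring
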